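/- Let ω > 0, γ, D_pp, D_qq, D_pq, r, s be real, let V : ℝ → ℝ be smooth, and let 𝓛 be the dual Lindbladian with potential V. Set X = r p² + (pq + qp) + s q². Then, as operators on C_c^∞(ℝ,ℂ): 𝓛(X) = −2(2γ r − 1) p² − 2 ω² q² + (s − 2γ − ω² r)(pq + qp) − r ( p V′(q) + V′(q) p ) − 2 q V′(q) + ( 2 r D_pp + 4 D_pq + 2 s D_qq ). -/

import Mathlib

open MeasureTheory Complex
open scoped ComplexOrder

noncomputable section

/-- Operators acting on complex-valued functions on `ℝ`. -/
abbrev Op : Type := (ℝ → ℂ) → (ℝ → ℂ)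

/-- The momentum operator `(p u)(x) = -i u'(x)`. -/
def pOp : Op := fun u x => -Complex.I * deriv u x

/-- The position operator `(q u)(x) = x * u(x)`. -/
def qOp : Op := fun u x => (x : ℂ) * u x

/-- Multiplication operator by a real-valued function. -/
def mulOp (f : ℝ → ℝ) : Op := fun u x => (f x : ℂ) * u x

/-- Commutator of two operators. -/
def opComm (A B : Op) : Op := fun u => A (B u) - B (A u)

/-- Anticommutator of two operators. -/
def opACom (A B : Op) : Op := fun u => A (B u) + B (A u)

/-- The `L²(ℝ,ℂ)` inner product, antilinear in the first argument. -/
def ip (u v : ℝ → ℂ) : ℂ := ∫ x : ℝ, (starRingEnd ℂ) (u x) * v x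

/-- `u ∈ C_c^∞(ℝ,ℂ)`: smooth and compactly supported. -/
def IsTest (u : ℝ → ℂ) : Prop := ContDiff ℝ (⊤ : ℕ∞) u ∧ HasCompactSupport u

/-- The dual Lindbladian (zero perturbation potential):
`𝓛(A) = (i/2)[p² + ω² q², A] + iγ{p,[q,A]} − D_qq [p,[p,A]] − D_pp [q,[q,A]] + 2 D_pq [q,[p,A]]`. -/
def Lind (ω γ Dpp Dqq Dpq : ℝ) (A : Op) : Op :=
  (Complex.I / 2) • opComm (fun u => pOp (pOp u) + ((ω^2 : ℝ) : ℂ) • qOp (qOp u)) A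
  + (Complex.I * (γ : ℂ)) • opACom pOp (opComm qOp A)
  - (Dqq : ℂ) • opComm pOp (opComm pOp A)
  - (Dpp : ℂ) • opComm qOp (opComm qOp A)
  + ((2 * Dpq : ℝ) : ℂ) • opComm qOp (opComm pOp A)

/-- `X = r p² + (pq + qp) + s q²`. -/
def Xop (r s : ℝ) : Op := (r : ℂ) • (pOp ∘ pOp) + opACom pOp qOp + (s : ℂ) • (qOp ∘ qOp)

/-- The dual Lindbladian with perturbation potential `V`:
`𝓛_V(A) = (i/2)[p² + ω² q² + 2V(q), A] + iγ{p,[q,A]} − D_qq[p,[p,A]] − D_pp[q,[q,A]] + 2D_pq[q,[p,A]]`. -/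
def LindV (ω γ Dpp Dqq Dpq : ℝ) (V : ℝ → ℝ) (A : Op) : Op :=
  Lind ω γ Dpp Dqq Dpq A + Complex.I • opComm (mulOp V) A


section Aux

lemma pOp_def (f : ℝ → ℂ) : pOp f = fun x => -Complex.I * deriv f x := rfl
lemma qOp_def (f : ℝ → ℂ) : qOp f = fun x : ℝ => (x : ℂ) * f x := rfl
lemma mulOp_def (W : ℝ → ℝ) (f : ℝ → ℂ) : mulOp W f = fun x : ℝ => (W x : ℂ) * f x := rfl
lemma addFn (f g : ℝ → ℂ) : f + g = fun y => f y + g y := rfl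
lemma subFn (f g : ℝ → ℂ) : f - g = fun y => f y - g y := rfl
lemma smulFn (c : ℂ) (f : ℝ → ℂ) : c • f = fun y => c * f y := rfl

lemma derivFn_add (f g : ℝ → ℂ) (hf : Differentiable ℝ f) (hg : Differentiable ℝ g) :
    (deriv fun y => f y + g y) = fun x => deriv f x + deriv g x :=
  funext fun x => deriv_add (hf x) (hg x)

lemma derivFn_sub (f g : ℝ → ℂ) (hf : Differentiable ℝ f) (hg : Differentiable ℝ g) :
    (deriv fun y => f y - g y) = fun x => deriv f x - deriv g x :=
  funext fun x => deriv_sub (hf x) (hg x)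

lemma derivFn_mul (f g : ℝ → ℂ) (hf : Differentiable ℝ f) (hg : Differentiable ℝ g) :
    (deriv fun y => f y * g y) = fun x => deriv f x * g x + f x * deriv g x :=
  funext fun x => deriv_mul (hf x) (hg x)

lemma derivFn_const_mul (c : ℂ) (f : ℝ → ℂ) :
    (deriv fun y => c * f y) = fun x => c * deriv f x :=
  funext fun x => deriv_const_mul_field c

lemma derivFn_const (c : ℂ) : (deriv fun _ : ℝ => c) = fun _ => 0 :=
  funext fun x => deriv_const x c

lemma derivFn_ofReal : (deriv fun y : ℝ => (y : ℂ)) = fun _ => 1 :=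
  funext fun z => by simpa using ((hasDerivAt_id z).ofReal_comp).deriv

end Aux

set_option maxHeartbeats 4000000 in
/-- `𝓛(X) = −2(2γr − 1)p² − 2ω²q² + (s − 2γ − ω²r)(pq+qp)
− r(pV′(q) + V′(q)p) − 2qV′(q) + (2rD_pp + 4D_pq + 2sD_qq)` on `C_c^∞(ℝ,ℂ)`. -/
theorem LindV_of_X (ω γ Dpp Dqq Dpq r s : ℝ) (hω : 0 < ω)
    (V : ℝ → ℝ) (hV : ContDiff ℝ (⊤ : ℕ∞) V)
    (u : ℝ → ℂ) (hu : IsTest u) :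
    LindV ω γ Dpp Dqq Dpq V (Xop r s) u =
      ((-2*(2*γ*r - 1) : ℝ) : ℂ) • pOp (pOp u)
      + ((-2*ω^2 : ℝ) : ℂ) • qOp (qOp u)
      + ((s - 2*γ - ω^2*r : ℝ) : ℂ) • opACom pOp qOp u
      + (-(r : ℂ)) • (pOp (mulOp (deriv V) u) + mulOp (deriv V) (pOp u))
      + ((-2 : ℝ) : ℂ) • qOp (mulOp (deriv V) u)
      + ((2*r*Dpp + 4*Dpq + 2*s*Dqq : ℝ) : ℂ) • u := by
  obtain ⟨hu, -⟩ := hu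
  have h0 : Differentiable ℝ u := hu.differentiable (by simp)
  have c1 : ContDiff ℝ (⊤ : ℕ∞) (deriv u) := (contDiff_infty_iff_deriv.1 hu).2
  have h1 : Differentiable ℝ (deriv u) := c1.differentiable (by simp)
  have c2 : ContDiff ℝ (⊤ : ℕ∞) (deriv (deriv u)) := (contDiff_infty_iff_deriv.1 c1).2
  have h2 : Differentiable ℝ (deriv (deriv u)) := c2.differentiable (by simp)
  have c3 : ContDiff ℝ (⊤ : ℕ∞) (deriv (deriv (deriv u))) := (contDiff_infty_iff_deriv.1 c2).2
  have h3 : Differentiable ℝ (deriv (deriv (deriv u))) := c3.differentiable (by simp)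
  have hVr : Differentiable ℝ V := hV.differentiable (by simp)
  have hV1r : Differentiable ℝ (deriv V) :=
    ((contDiff_infty_iff_deriv.1 hV).2).differentiable (by simp)
  have hVc : Differentiable ℝ (fun y : ℝ => ((V y : ℝ) : ℂ)) :=
    fun z => ((hVr z).hasDerivAt.ofReal_comp).differentiableAt
  have hV1c : Differentiable ℝ (fun y : ℝ => ((deriv V y : ℝ) : ℂ)) :=
    fun z => ((hV1r z).hasDerivAt.ofReal_comp).differentiableAt
  have eV : ∀ z : ℝ, deriv (fun y : ℝ => ((V y : ℝ) : ℂ)) z = ((deriv V z : ℝ) : ℂ) :=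
    fun z => ((hVr z).hasDerivAt.ofReal_comp).deriv
  have eV1 : ∀ z : ℝ, deriv (fun y : ℝ => ((deriv V y : ℝ) : ℂ)) z
      = ((deriv (deriv V) z : ℝ) : ℂ) :=
    fun z => ((hV1r z).hasDerivAt.ofReal_comp).deriv
  have hoc : Differentiable ℝ (fun y : ℝ => (y : ℂ)) := Complex.ofRealCLM.differentiable
  have eid : ∀ z : ℝ, deriv (fun y : ℝ => (y : ℂ)) z = 1 := fun z => by
    simpa using ((hasDerivAt_id z).ofReal_comp).deriv
  funext x
  simp (disch := fun_prop) only [LindV, Lind, Xop, opComm, opACom, pOp_def, qOp_def,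
    mulOp_def, addFn, subFn, smulFn, Pi.add_apply, Pi.sub_apply, Pi.smul_apply,
    Function.comp_apply, smul_eq_mul, deriv_add, deriv_sub, deriv_mul,
    deriv_const_mul_field', deriv_const', eid, eV, eV1, derivFn_add, derivFn_sub,
    derivFn_mul, derivFn_const_mul, derivFn_const, derivFn_ofReal]
  push_cast
  have hI3 : Complex.I ^ 3 = -Complex.I := by
    rw [pow_succ, Complex.I_sq]; ring
  have hI4 : Complex.I ^ 4 = 1 := by
    rw [pow_succ, hI3]; simp [Complex.I_mul_I]
  ring_nf
  simp only [Complex.I_sq, hI3, hI4]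
  ring
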